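/- Let T_n(t) be semigroups with ‖T_n(t)‖ ≤ M e^{ωt} on subspaces Z_n, sn a seminorm with sn ≤ ‖·‖ on Z, and suppose f_n : [0, t₀] → Z are functions with ‖f_n(s)‖ ≤ C uniformly and sn(f_n(s)) → 0 uniformly on [0,t₀], and suppose the family {T_n(t)} is bi-equicontinuous so that sn-smallness of norm-bounded inputs propagates: there is a function ε ↦ δ(ε) such that sn(T_n(t)z) ≤ ε whenever ‖z‖ ≤ C and sn'(z) ≤ δ(ε) for an appropriate seminorm sn'. Then sn(∫₀^t T_n(t−s) f_n(s) ds) → 0 as n → ∞, uniformly for t ∈ [0, t₀]. -/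

import Mathlib

open Filter Set Topology intervalIntegral

/-- A seminorm dominated by the norm is bounded on integrals by the pointwise bound
times interval length. -/
lemma seminorm_intervalIntegral_le
    {Z : Type*} [NormedAddCommGroup Z] [NormedSpace ℝ Z] [CompleteSpace Z]
    (q : Seminorm ℝ Z) (hq : ∀ z, q z ≤ ‖z‖)
    {g : ℝ → Z} {b ε : ℝ} (hb : 0 ≤ b) (hε : 0 ≤ ε)
    (hint : IntervalIntegrable g MeasureTheory.volume 0 b)
    (hle : ∀ s ∈ Ioc (0:ℝ) b, q (g s) ≤ ε) :
    q (∫ s in (0:ℝ)..b, g s) ≤ ε * b := by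
  rcases eq_or_lt_of_le hb with rfl | hb'
  · simp
  have hqcont : Continuous (q : Z → ℝ) := by
    have hlip : LipschitzWith 1 (q : Z → ℝ) := by
      intro x y
      rw [edist_dist, edist_dist, ENNReal.coe_one, one_mul]
      refine ENNReal.ofReal_le_ofReal ?_
      rw [Real.dist_eq, dist_eq_norm, abs_sub_le_iff]
      constructor
      · have h1 : q x ≤ q (x - y) + q y := by
          simpa using map_add_le_add q (x - y) y
        linarith [hq (x - y)]
      · have h1 : q y ≤ q (y - x) + q x := by
          simpa using map_add_le_add q (y - x) x
        have h2 : q (y - x) ≤ ‖x - y‖ := by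
          rw [← norm_neg]; simpa [neg_sub] using hq (y - x)
        linarith
    exact hlip.continuous
  set sset : Set Z := {z | q z ≤ ε} with hsset
  have hconv : Convex ℝ sset := by
    have := q.convexOn.convex_le ε
    simpa [sset, sep_univ] using this
  have hclosed : IsClosed sset := IsClosed.preimage hqcont isClosed_Iic
  have hμ0 : MeasureTheory.volume (Ioc (0:ℝ) b) ≠ 0 := by
    simp [Real.volume_Ioc, hb']
  have hμtop : MeasureTheory.volume (Ioc (0:ℝ) b) ≠ ⊤ := by
    simp [Real.volume_Ioc]
  have hintOn : MeasureTheory.IntegrableOn g (Ioc (0:ℝ) b) MeasureTheory.volume := hint.1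
  have hfs : ∀ᵐ x ∂(MeasureTheory.volume.restrict (Ioc (0:ℝ) b)), g x ∈ sset := by
    refine (MeasureTheory.ae_restrict_iff' measurableSet_Ioc).2 ?_
    exact MeasureTheory.ae_of_all _ fun s hs => hle s hs
  have havg : (⨍ x in Ioc (0:ℝ) b, g x ∂MeasureTheory.volume) ∈ sset :=
    hconv.set_average_mem hclosed hμ0 hμtop hfs hintOn
  have heq : (∫ s in (0:ℝ)..b, g s) =
      (MeasureTheory.volume (Ioc (0:ℝ) b)).toReal •
        ⨍ x in Ioc (0:ℝ) b, g x ∂MeasureTheory.volume := by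
    rw [← MeasureTheory.measureReal_def, MeasureTheory.measure_smul_setAverage _ hμtop,
      intervalIntegral.integral_of_le hb]
  have hvol : (MeasureTheory.volume (Ioc (0:ℝ) b)).toReal = b := by
    simp [Real.volume_Ioc, hb]
  rw [heq, map_smul_eq_mul, hvol, Real.norm_of_nonneg hb, mul_comm]
  exact mul_le_mul_of_nonneg_right havg hb

/-- Uniform τ-convergence of convolution integrals: if the `f_n` are uniformly
norm-bounded with seminorms tending to `0` uniformly on `[0, t₀]`, and the family
`(T_n)` is uniformly (locally) bi-equicontinuous, then
`sn(∫₀ᵗ T_n(t-s) f_n(s) ds) → 0` uniformly for `t ∈ [0, t₀]`. -/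
theorem convolution_integral_tau_convergence
    {Z : Type*} [NormedAddCommGroup Z] [NormedSpace ℝ Z] [CompleteSpace Z]
    {ι : Type*} (p : ι → Seminorm ℝ Z)
    (hple : ∀ j z, p j z ≤ ‖z‖)
    (Tn : ℕ → ℝ → Z →L[ℝ] Z) (M ω : ℝ) (hM : 1 ≤ M)
    (hTnbound : ∀ n, ∀ t ≥ (0:ℝ), ‖Tn n t‖ ≤ M * Real.exp (ω * t))
    (t₀ : ℝ) (ht₀ : 0 < t₀)
    (f : ℕ → ℝ → Z) (C : ℝ)
    -- uniform norm boundedness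
    (hfbdd : ∀ n, ∀ s ∈ Icc (0:ℝ) t₀, ‖f n s‖ ≤ C)
    -- integrability (strong measurability of the integrands)
    (hfint : ∀ n, ∀ t ∈ Icc (0:ℝ) t₀,
      IntervalIntegrable (fun s => Tn n (t - s) (f n s)) MeasureTheory.volume 0 t)
    -- `sn(f_n(s)) → 0` uniformly on `[0, t₀]` (τ-convergence to `0`)
    (hfconv : ∀ j, ∀ ε > (0:ℝ), ∃ N, ∀ n ≥ N, ∀ s ∈ Icc (0:ℝ) t₀, p j (f n s) < ε)
    (i : ι)
    -- uniform bi-equicontinuity of the family `(T_n)`: seminorm-smallness of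
    -- norm-bounded inputs propagates through `T_n(t)`
    (hbieq : ∀ ε > (0:ℝ), ∃ (j : ι) (δ : ℝ), 0 < δ ∧
      ∀ n, ∀ t ∈ Icc (0:ℝ) t₀, ∀ z : Z, ‖z‖ ≤ C → p j z ≤ δ → p i (Tn n t z) ≤ ε) :
    ∀ ε > (0:ℝ), ∃ N, ∀ n ≥ N, ∀ t ∈ Icc (0:ℝ) t₀,
      p i (∫ s in (0:ℝ)..t, Tn n (t - s) (f n s)) ≤ ε := by
  intro ε hε
  set ε' : ℝ := ε / t₀ with hε'def
  have hε' : 0 < ε' := div_pos hε ht₀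
  obtain ⟨j, δ, hδ, hprop⟩ := hbieq ε' hε'
  obtain ⟨N, hN⟩ := hfconv j δ hδ
  refine ⟨N, fun n hn t ht => ?_⟩
  have ht0 : 0 ≤ t := ht.1
  have htt₀ : t ≤ t₀ := ht.2
  have key : p i (∫ s in (0:ℝ)..t, Tn n (t - s) (f n s)) ≤ ε' * t := by
    refine seminorm_intervalIntegral_le (p i) (hple i) ht0 hε'.le
      (hfint n t ht) (fun s hs => ?_)
    have hsIcc : s ∈ Icc (0:ℝ) t₀ := ⟨hs.1.le, hs.2.trans htt₀⟩
    have htsIcc : t - s ∈ Icc (0:ℝ) t₀ :=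
      ⟨by linarith [hs.2], by linarith [hs.1]⟩
    exact hprop n (t - s) htsIcc (f n s) (hfbdd n s hsIcc)
      (hN n hn s hsIcc).le
  calc p i (∫ s in (0:ℝ)..t, Tn n (t - s) (f n s)) ≤ ε' * t := key
    _ ≤ ε' * t₀ := mul_le_mul_of_nonneg_left htt₀ hε'.le
    _ = ε := div_mul_cancel₀ ε ht₀.ne'
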